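/- arXiv:1410.3379 — 3 statements merged into one kernel-verified Lean document; each statement's English description precedes it below -/
import Mathlib

section
/- Linear growth of one-sided measures: if w ∈ A_1^+, then there is a constant C such that for every a ∈ ℝ, h > 0, and λ > 1, w([a - λh, a]) ≤ C λ w([a - h, a]). -/
open MeasureTheory

/-- `w ∈ A₁⁺` with constant `C`: `M⁻w ≤ C w` a.e. -/
def A1PlusWith (w : ℝ → ℝ) (C : ℝ) : Prop :=
  ∀ᵐ x : ℝ, ∀ h : ℝ, 0 < h →
    (1 / h) * ∫ y in Set.Ioc (x - h) x, w y ≤ C * w x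

/-- Linear growth of one-sided measures: if `w ∈ A₁⁺`, then
`w([a - λh, a]) ≤ C λ w([a - h, a])` for all `a ∈ ℝ`, `h > 0`, `λ > 1`. -/
theorem A1Plus_linear_growth (w : ℝ → ℝ) (hw : ∀ x, 0 ≤ w x)
    (C₀ : ℝ) (hA : A1PlusWith w C₀) :
    ∃ C : ℝ, 0 < C ∧ ∀ a h lam : ℝ, 0 < h → 1 < lam →
      ∫ x in Set.Icc (a - lam * h) a, w x ≤ C * lam * ∫ x in Set.Icc (a - h) a, w x := by
  set C₁ := max C₀ 0 with hC₁def
  have hC₁0 : 0 ≤ C₁ := le_max_right _ _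
  have hC₀C₁ : C₀ ≤ C₁ := le_max_left _ _
  refine ⟨C₁ + 1, by positivity, ?_⟩
  intro a h lam hh hlam
  have hI0 : 0 ≤ ∫ x in Set.Icc (a - h) a, w x :=
    setIntegral_nonneg measurableSet_Icc fun x _ => hw x
  by_cases hInt : IntegrableOn w (Set.Icc (a - lam * h) a) volume
  · set I := ∫ x in Set.Icc (a - h) a, w x with hIdef
    set L := ∫ x in Set.Icc (a - lam * h) a, w x with hLdef
    have hlh : a - lam * h ≤ a - h := by nlinarith
    have hsub : Set.Icc (a - h) a ⊆ Set.Icc (a - lam * h) a :=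
      Set.Icc_subset_Icc hlh le_rfl
    have hIntSmall : IntegrableOn w (Set.Icc (a - h) a) volume := hInt.mono_set hsub
    have hIntIoc : IntegrableOn w (Set.Ioc (a - h) a) volume :=
      hIntSmall.mono_set Set.Ioc_subset_Icc_self
    -- key pointwise estimate
    have key : ∀ᵐ x ∂(volume.restrict (Set.Ioc (a - h) a)),
        L ≤ C₁ * (lam * h) * w x + I := by
      filter_upwards [ae_restrict_of_ae hA, ae_restrict_mem measurableSet_Ioc]
        with x hx hxmem
      obtain ⟨hx1, hx2⟩ := hxmem
      set h' : ℝ := x - (a - lam * h) with hh'def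
      have hh' : 0 < h' := by simp only [hh'def]; nlinarith
      have h1 := hx h' hh'
      have hxh' : x - h' = a - lam * h := by ring
      rw [hxh'] at h1
      have h2 : ∫ y in Set.Ioc (a - lam * h) x, w y ≤ C₀ * w x * h' := by
        rw [one_div, inv_mul_le_iff₀ hh'] at h1
        linarith [h1]
      have h3 : ∫ y in Set.Ioc (a - lam * h) x, w y ≤ C₁ * (lam * h) * w x := by
        have hh'le : h' ≤ lam * h := by simp only [hh'def]; nlinarith
        nlinarith [mul_nonneg (mul_nonneg (sub_nonneg.2 hC₀C₁) (hw x)) hh'.le,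
          mul_le_mul_of_nonneg_left hh'le (mul_nonneg hC₁0 (hw x))]
      -- split the big integral
      have hxle : a - lam * h ≤ x := by nlinarith
      have hdisj : Disjoint (Set.Ioc (a - lam * h) x) (Set.Ioc x a) := by
        rw [Set.disjoint_left]
        rintro t ⟨_, ht1⟩ ⟨ht2, _⟩
        linarith
      have hsplit : L = (∫ y in Set.Ioc (a - lam * h) x, w y) + ∫ y in Set.Ioc x a, w y := by
        rw [hLdef, MeasureTheory.integral_Icc_eq_integral_Ioc,
          ← setIntegral_union hdisj measurableSet_Ioc
            (hInt.mono_set (fun t ht => ⟨le_of_lt ht.1, le_trans ht.2 hx2⟩))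
            (hInt.mono_set (fun t ht => ⟨by linarith [ht.1], ht.2⟩)),
          Set.Ioc_union_Ioc_eq_Ioc hxle hx2]
      have htail : ∫ y in Set.Ioc x a, w y ≤ I := by
        rw [hIdef]
        refine setIntegral_mono_set hIntSmall ?_ ?_
        · exact Filter.Eventually.of_forall fun t => hw t
        · exact HasSubset.Subset.eventuallyLE (fun t ht => ⟨by linarith [ht.1], ht.2⟩)
      rw [hsplit]
      linarith
    -- integrate key over Ioc (a-h) a
    have hvol : volume (Set.Ioc (a - h) a) = ENNReal.ofReal h := by
      rw [Real.volume_Ioc]; congr 1; ring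
    have hintL : ∫ _x in Set.Ioc (a - h) a, L = L * h := by
      rw [setIntegral_const, measureReal_def, hvol, smul_eq_mul, ENNReal.toReal_ofReal hh.le, mul_comm]
    have hintR : ∫ x in Set.Ioc (a - h) a, (C₁ * (lam * h) * w x + I)
        = C₁ * (lam * h) * I + I * h := by
      rw [integral_add (hIntIoc.const_mul _) (integrableOn_const (by
        rw [hvol]; exact ENNReal.ofReal_lt_top.ne)), integral_const_mul,
        setIntegral_const, measureReal_def, hvol, smul_eq_mul, ENNReal.toReal_ofReal hh.le,
        ← MeasureTheory.integral_Icc_eq_integral_Ioc, ← hIdef]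
      ring
    have hmono : ∫ _x in Set.Ioc (a - h) a, L
        ≤ ∫ x in Set.Ioc (a - h) a, (C₁ * (lam * h) * w x + I) := by
      refine integral_mono_ae (integrableOn_const (by
        rw [hvol]; exact ENNReal.ofReal_lt_top.ne))
        ((hIntIoc.const_mul _).add (integrableOn_const (by
          rw [hvol]; exact ENNReal.ofReal_lt_top.ne))) key
    rw [hintL, hintR] at hmono
    -- conclude
    nlinarith [hI0, mul_nonneg hC₁0 hI0]
  · rw [integral_undef hInt]
    have : 0 ≤ (C₁ + 1) * lam := by positivity
    exact mul_nonneg this hI0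
end

section
/- Sublevel set estimate for polynomials (Ricci–Stein): let Q(x) = Σ_{α ≤ d} q_α x^α be a real polynomial of degree d, and suppose 0 < ε < 1/d. Then ∫_{|x| ≤ 1} |Q(x)|^{-ε} dx ≤ A_ε (Σ_{α ≤ d} |q_α|)^{-ε}, where A_ε depends only on ε and d, not on the coefficients of Q. -/
open MeasureTheory Polynomial

lemma exists_separated_points : ∀ (n : ℕ) (E : Set ℝ), volume E ≠ ⊤ → ∀ s : ℝ, 0 < s →
    2 * n * s < (volume E).toReal →
    ∃ p : Fin (n+1) → ℝ, (∀ i, p i ∈ E) ∧ ∀ i j, i ≠ j → s ≤ |p i - p j| := by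
  intro n
  induction n with
  | zero =>
    intro E hfin s hs h
    have h0 : volume E ≠ 0 := by
      intro h0
      rw [h0] at h
      simp at h
    obtain ⟨x, hx⟩ := nonempty_of_measure_ne_zero h0
    exact ⟨fun _ => x, fun _ => hx, fun i j hij =>
      absurd (Fin.ext (by omega : i.1 = j.1)) hij⟩
  | succ n ih =>
    intro E hfin s hs h
    have h0 : volume E ≠ 0 := by
      intro h0
      rw [h0] at h
      simp only [ENNReal.toReal_zero] at h
      have hn : (0:ℝ) ≤ (n:ℝ) := Nat.cast_nonneg n
      push_cast at h
      nlinarith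
    obtain ⟨x, hx⟩ := nonempty_of_measure_ne_zero h0
    set F := E \ Metric.ball x s with hF
    have hFsub : F ⊆ E := Set.diff_subset
    have hFfin : volume F ≠ ⊤ := fun ht => hfin (top_le_iff.mp (ht ▸ measure_mono hFsub))
    have hEle : volume E ≤ volume F + volume (Metric.ball x s) := by
      calc volume E ≤ volume (F ∪ Metric.ball x s) := measure_mono (by
            intro y hy
            by_cases hb : y ∈ Metric.ball x s
            · exact Or.inr hb
            · exact Or.inl ⟨hy, hb⟩)
        _ ≤ volume F + volume (Metric.ball x s) := measure_union_le _ _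
    have hball : volume (Metric.ball x s) = ENNReal.ofReal (2 * s) := by
      rw [Real.volume_ball]
    have hEle2 : volume E ≤ volume F + ENNReal.ofReal (2 * s) := hball ▸ hEle
    have hne : volume F + ENNReal.ofReal (2 * s) ≠ ⊤ :=
      ENNReal.add_ne_top.mpr ⟨hFfin, ENNReal.ofReal_ne_top⟩
    have htr : (volume E).toReal ≤ (volume F).toReal + 2 * s := by
      have := ENNReal.toReal_mono hne hEle2
      rwa [ENNReal.toReal_add hFfin ENNReal.ofReal_ne_top,
        ENNReal.toReal_ofReal (by positivity)] at this
    have hvolF : 2 * n * s < (volume F).toReal := by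
      push_cast at h ⊢
      nlinarith
    obtain ⟨p', hp'E, hp'sep⟩ := ih F hFfin s hs hvolF
    have hxp' : ∀ j, s ≤ |x - p' j| := by
      intro j
      have := (hp'E j).2
      rw [Metric.mem_ball, Real.dist_eq, not_lt] at this
      rw [abs_sub_comm]
      exact this
    refine ⟨Fin.cons x p', ?_, ?_⟩
    · intro i
      refine Fin.cases ?_ ?_ i
      · exact hx
      · intro j; exact hFsub (hp'E j)
    · intro i j hij
      rcases Fin.eq_zero_or_eq_succ i with hi | ⟨i', hi⟩ <;>
        rcases Fin.eq_zero_or_eq_succ j with hj | ⟨j', hj⟩ <;> subst hi <;> subst hj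
      · exact absurd rfl hij
      · simpa using hxp' j'
      · rw [abs_sub_comm]; simpa using hxp' i'
      · simp only [Fin.cons_succ]
        exact hp'sep i' j' (fun hcon => hij (by rw [hcon]))

noncomputable def lagC (d : ℕ) : ℝ :=
  ∑ i ∈ Finset.range (d+1), ∑ j ∈ Finset.range (d+1),
    |(Lagrange.basis (Finset.range (d+1)) (fun j : ℕ => (j:ℝ)) j).coeff i|

lemma coeff_sum_le (d : ℕ) (Q : Polynomial ℝ) (hQ : Q.natDegree ≤ d) :
    ∃ j ∈ Finset.range (d+1),
      ∑ i ∈ Finset.range (d+1), |Q.coeff i| ≤ lagC d * |Q.eval (j : ℝ)| := by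
  classical
  set s := Finset.range (d+1) with hs
  set v : ℕ → ℝ := fun j => (j:ℝ) with hv
  have hInj : Set.InjOn v s := fun a _ b _ hab => Nat.cast_injective hab
  have hdeg : Q.degree < (s.card : WithBot ℕ) := by
    rw [hs, Finset.card_range]
    calc Q.degree ≤ (Q.natDegree : WithBot ℕ) := Polynomial.degree_le_natDegree
      _ < ((d+1 : ℕ) : WithBot ℕ) := by exact_mod_cast Nat.lt_succ_of_le hQ
  have hrep := Lagrange.eq_interpolate hInj hdeg
  have hcoeff : ∀ i, Q.coeff i = ∑ j ∈ s, Q.eval (v j) * (Lagrange.basis s v j).coeff i := by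
    intro i
    conv_lhs => rw [hrep]
    rw [Lagrange.interpolate_apply, Polynomial.finset_sum_coeff]
    exact Finset.sum_congr rfl fun j _ => by rw [Polynomial.coeff_C_mul]
  have hne : s.Nonempty := ⟨0, Finset.mem_range.mpr (Nat.succ_pos d)⟩
  obtain ⟨j, hj, hjmax⟩ := Finset.exists_mem_eq_sup' hne (fun j => |Q.eval (v j)|)
  refine ⟨j, hj, ?_⟩
  have hMnn : 0 ≤ |Q.eval (v j)| := abs_nonneg _
  calc ∑ i ∈ s, |Q.coeff i|
      ≤ ∑ i ∈ s, ∑ k ∈ s, |Q.eval (v k)| * |(Lagrange.basis s v k).coeff i| := by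
        refine Finset.sum_le_sum fun i _ => ?_
        rw [hcoeff i]
        refine le_trans (Finset.abs_sum_le_sum_abs _ _) ?_
        exact Finset.sum_le_sum fun k _ => le_of_eq (abs_mul _ _)
    _ ≤ ∑ i ∈ s, ∑ k ∈ s, |Q.eval (v j)| * |(Lagrange.basis s v k).coeff i| := by
        refine Finset.sum_le_sum fun i _ => Finset.sum_le_sum fun k hk => ?_
        refine mul_le_mul_of_nonneg_right ?_ (abs_nonneg _)
        rw [← hjmax]
        exact Finset.le_sup' (fun j => |Q.eval (v j)|) hk
    _ = lagC d * |Q.eval (v j)| := by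
        simp only [lagC]
        rw [Finset.sum_mul]
        refine Finset.sum_congr rfl fun i _ => ?_
        rw [Finset.sum_mul]
        exact Finset.sum_congr rfl fun k _ => mul_comm _ _

lemma abs_eval_le_of_sep (n : ℕ) (Q : Polynomial ℝ)
    (hQ : Q.degree < ((n+1 : ℕ) : WithBot ℕ)) (p : Fin (n+1) → ℝ)
    (x : ℝ) (l B s : ℝ) (hs : 0 < s) (hB0 : 0 ≤ B)
    (hl : ∀ m, |Q.eval (p m)| ≤ l) (hB : ∀ k, |x - p k| ≤ B)
    (hsep : ∀ i j, i ≠ j → s ≤ |p i - p j|) :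
    |Q.eval x| ≤ (n+1) * l * (B / s) ^ n := by
  classical
  have hinj : Set.InjOn p (Finset.univ : Finset (Fin (n+1))) := by
    intro a _ b _ hab
    by_contra hne
    have := hsep a b hne
    rw [hab, sub_self, abs_zero] at this
    linarith
  have hdeg : Q.degree < ((Finset.univ : Finset (Fin (n+1))).card : WithBot ℕ) := by
    rwa [Finset.card_univ, Fintype.card_fin]
  have hrep := Lagrange.eq_interpolate hinj hdeg
  have heval : Q.eval x = ∑ m : Fin (n+1), Q.eval (p m) *
      (Lagrange.basis Finset.univ p m).eval x := by
    conv_lhs => rw [hrep]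
    rw [Lagrange.interpolate_apply, Polynomial.eval_finset_sum]
    exact Finset.sum_congr rfl fun m _ => by rw [Polynomial.eval_mul, Polynomial.eval_C]
  have hbasis : ∀ m : Fin (n+1), |(Lagrange.basis Finset.univ p m).eval x| ≤ (B / s) ^ n := by
    intro m
    rw [Lagrange.basis, Polynomial.eval_prod, Finset.abs_prod]
    have hcard : (Finset.univ.erase m).card = n := by
      rw [Finset.card_erase_of_mem (Finset.mem_univ m), Finset.card_univ, Fintype.card_fin]
      omega
    calc ∏ j ∈ Finset.univ.erase m, |(Lagrange.basisDivisor (p m) (p j)).eval x|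
        ≤ ∏ j ∈ Finset.univ.erase m, (B / s) := by
          refine Finset.prod_le_prod (fun j _ => abs_nonneg _) fun j hj => ?_
          have hjm : j ≠ m := (Finset.mem_erase.mp hj).1
          rw [Lagrange.basisDivisor, Polynomial.eval_mul, Polynomial.eval_C,
            Polynomial.eval_sub, Polynomial.eval_X, Polynomial.eval_C, abs_mul, abs_inv]
          have hsep' : s ≤ |p m - p j| := hsep m j (Ne.symm hjm)
          have h1 : |p m - p j|⁻¹ ≤ s⁻¹ := by
            apply inv_anti₀ hs hsep'
          calc |p m - p j|⁻¹ * |x - p j| ≤ s⁻¹ * B :=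
              mul_le_mul h1 (hB j) (abs_nonneg _) (by positivity)
            _ = B / s := by rw [div_eq_mul_inv, mul_comm]
      _ = (B / s) ^ n := by rw [Finset.prod_const, hcard]
  have hl0 : 0 ≤ l := le_trans (abs_nonneg _) (hl 0)
  calc |Q.eval x| ≤ ∑ m : Fin (n+1), |Q.eval (p m) * (Lagrange.basis Finset.univ p m).eval x| := by
        rw [heval]; exact Finset.abs_sum_le_sum_abs _ _
    _ ≤ ∑ m : Fin (n+1), l * (B / s) ^ n := by
        refine Finset.sum_le_sum fun m _ => ?_
        rw [abs_mul]
        exact mul_le_mul (hl m) (hbasis m) (abs_nonneg _) hl0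
    _ = (n+1) * l * (B / s) ^ n := by
        rw [Finset.sum_const, Finset.card_univ, Fintype.card_fin, nsmul_eq_mul]
        push_cast
        ring

lemma lagC_nonneg (d : ℕ) : 0 ≤ lagC d :=
  Finset.sum_nonneg fun _ _ => Finset.sum_nonneg fun _ _ => abs_nonneg _

lemma sublevel_bound (d : ℕ) (hd : 0 < d) :
    ∃ C : ℝ, 1 ≤ C ∧ ∀ Q : Polynomial ℝ, Q.natDegree = d → ∀ l : ℝ, 0 ≤ l →
    (volume {x | x ∈ Set.Icc (-1:ℝ) 1 ∧ |Q.eval x| ≤ l}).toReal ^ d *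
      (∑ i ∈ Finset.range (d+1), |Q.coeff i|) ≤ C * l := by
  classical
  set c₀ : ℝ := (2*(d+1))^d * (d+1)^(d+1) * lagC d with hc₀
  have hc₀0 : 0 ≤ c₀ := mul_nonneg (by positivity) (lagC_nonneg d)
  refine ⟨max 1 c₀, le_max_left _ _, ?_⟩
  intro Q hQ l hl
  set N := ∑ i ∈ Finset.range (d+1), |Q.coeff i| with hN
  set E := {x | x ∈ Set.Icc (-1:ℝ) 1 ∧ |Q.eval x| ≤ l} with hE
  have hEsub : E ⊆ Set.Icc (-1:ℝ) 1 := fun x hx => hx.1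
  have hfin : volume E ≠ ⊤ := by
    have h1 : volume E ≤ volume (Set.Icc (-1:ℝ) 1) := measure_mono hEsub
    have h2 : volume (Set.Icc (-1:ℝ) 1) < ⊤ := by
      rw [Real.volume_Icc]; exact ENNReal.ofReal_lt_top
    exact (h1.trans_lt h2).ne
  set δ := (volume E).toReal with hδ
  have hδ0 : 0 ≤ δ := ENNReal.toReal_nonneg
  rcases eq_or_lt_of_le hδ0 with hδz | hδpos
  · rw [← hδz, zero_pow hd.ne', zero_mul]
    exact mul_nonneg (le_trans zero_le_one (le_max_left _ _)) hl
  · set s : ℝ := δ / (2*(d+1)) with hs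
    have hspos : 0 < s := by positivity
    have hδs : δ = 2*((d:ℝ)+1) * s := by
      rw [hs]; field_simp
    have hsep : 2 * (d:ℝ) * s < δ := by
      rw [hδs]
      nlinarith
    obtain ⟨p, hpE, hpsep⟩ := exists_separated_points d E hfin s hspos (by
      rwa [hδ] at hsep)
    obtain ⟨j, hj, hjN⟩ := coeff_sum_le d Q (le_of_eq hQ)
    have hdeg : Q.degree < ((d+1 : ℕ) : WithBot ℕ) := by
      calc Q.degree ≤ (Q.natDegree : WithBot ℕ) := Polynomial.degree_le_natDegree
        _ < ((d+1 : ℕ) : WithBot ℕ) := by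
            have h1 : Q.natDegree < d + 1 := by rw [hQ]; exact Nat.lt_succ_self d
            exact_mod_cast h1
    have hjd : (j:ℝ) ≤ d := by
      have := Finset.mem_range.mp hj
      exact_mod_cast Nat.lt_succ_iff.mp this
    have hB : ∀ k, |(j:ℝ) - p k| ≤ (d:ℝ)+1 := by
      intro k
      have h1 := (hEsub (hpE k)).1
      have h2 := (hEsub (hpE k)).2
      have h3 : (0:ℝ) ≤ j := Nat.cast_nonneg j
      rw [abs_le]
      constructor <;> nlinarith
    have hev := abs_eval_le_of_sep d Q hdeg p (j:ℝ) l ((d:ℝ)+1) s hspos (by positivity)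
      (fun m => (hpE m).2) hB hpsep
    have hNle : N ≤ lagC d * ((d+1) * l * (((d:ℝ)+1) / s) ^ d) :=
      hjN.trans (mul_le_mul_of_nonneg_left hev (lagC_nonneg d))
    have key : δ ^ d * N ≤ c₀ * l := by
      rw [hδs, mul_pow, hc₀]
      have hsd : (0:ℝ) < s ^ d := by positivity
      calc (2*((d:ℝ)+1))^d * s^d * N ≤ (2*((d:ℝ)+1))^d * s^d *
            (lagC d * ((d+1) * l * (((d:ℝ)+1) / s) ^ d)) := by
            refine mul_le_mul_of_nonneg_left hNle (by positivity)
        _ = (2*((d:ℝ)+1))^d * ((d:ℝ)+1)^(d+1) * lagC d * l := by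
            have hcancel : (((d:ℝ)+1)/s)^d * s^d = ((d:ℝ)+1)^d := by
              rw [div_pow, div_mul_cancel₀ _ hsd.ne']
            rw [pow_succ, ← hcancel]
            ring
    calc δ ^ d * N ≤ c₀ * l := key
      _ ≤ max 1 c₀ * l := mul_le_mul_of_nonneg_right (le_max_right _ _) hl


/-- Sublevel set estimate for polynomials (Ricci–Stein): if `Q` has degree `d ≥ 1`
and `0 < ε < 1/d`, then `∫_{|x|≤1} |Q(x)|^{-ε} dx ≤ A_ε (Σ |q_α|)^{-ε}`, with
`A_ε` depending only on `ε` and `d`. -/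
theorem ricci_stein_sublevel (d : ℕ) (hd : 0 < d) (ε : ℝ) (hε₀ : 0 < ε)
    (hε : ε < 1 / (d : ℝ)) :
    ∃ A : ℝ, 0 < A ∧ ∀ Q : Polynomial ℝ, Q.natDegree = d →
      ∫ x in Set.Icc (-1 : ℝ) 1, |Q.eval x| ^ (-ε) ≤
        A * (∑ i ∈ Finset.range (d + 1), |Q.coeff i|) ^ (-ε) := by
  obtain ⟨C, hC1, hCbound⟩ := sublevel_bound d hd
  have hC0 : (0:ℝ) < C := lt_of_lt_of_le one_pos hC1
  have hdpos : (0:ℝ) < d := Nat.cast_pos.mpr hd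
  set p : ℝ := 1 / (ε * d) with hp
  have hεd : ε * (d:ℝ) < 1 := by
    have h1 := mul_lt_mul_of_pos_right hε hdpos
    rwa [one_div, inv_mul_cancel₀ hdpos.ne'] at h1
  have hεd0 : 0 < ε * (d:ℝ) := by positivity
  have hp1 : 1 < p := one_lt_one_div hεd0 hεd
  have hεp : ε * p = (d:ℝ)⁻¹ := by
    rw [hp]
    field_simp
  set A : ℝ := 2 + C ^ ((d:ℝ)⁻¹) / (p - 1) with hA
  have hCd : 0 < C ^ ((d:ℝ)⁻¹) := Real.rpow_pos_of_pos hC0 _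
  have hp1' : 0 < p - 1 := by linarith
  have hApos : 0 < A := by positivity
  refine ⟨A, hApos, ?_⟩
  intro Q hQ
  set N := ∑ i ∈ Finset.range (d + 1), |Q.coeff i| with hN
  have hQ0 : Q ≠ 0 := by
    intro h
    rw [h, Polynomial.natDegree_zero] at hQ
    omega
  have hNpos : 0 < N := by
    have h1 : 0 < |Q.coeff d| := by
      rw [abs_pos, ← hQ]
      exact Polynomial.leadingCoeff_ne_zero.mpr hQ0
    have h2 : |Q.coeff d| ≤ N := by
      rw [hN]
      exact Finset.single_le_sum (f := fun i => |Q.coeff i|) (fun i _ => abs_nonneg _)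
        (Finset.mem_range.mpr (Nat.lt_succ_self d))
    linarith
  have hNε : 0 < N ^ (-ε) := Real.rpow_pos_of_pos hNpos _
  set g : ℝ → ℝ := fun x => |Q.eval x| ^ (-ε) with hg
  set μ := volume.restrict (Set.Icc (-1:ℝ) 1) with hμ
  show ∫ x, g x ∂μ ≤ A * N ^ (-ε)
  by_cases hint : Integrable g μ
  swap
  · rw [integral_undef hint]
    positivity
  have hgnn : 0 ≤ᵐ[μ] g := Filter.Eventually.of_forall fun x =>
    Real.rpow_nonneg (abs_nonneg _) _
  rw [hint.integral_eq_integral_meas_lt hgnn]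
  set K := C ^ ((d:ℝ)⁻¹) / N ^ ((d:ℝ)⁻¹) with hK
  have hKpos : 0 < K := div_pos hCd (Real.rpow_pos_of_pos hNpos _)
  set h : ℝ → ℝ := fun t => min 2 (K * t ^ (-p)) with hh
  -- pointwise bound
  have hbound : ∀ t : ℝ, 0 < t → (μ {a | t < g a}).toReal ≤ h t := by
    intro t ht
    refine le_min ?_ ?_
    · have h1 : μ {a | t < g a} ≤ ENNReal.ofReal 2 := by
        calc μ {a | t < g a} ≤ μ Set.univ := measure_mono (Set.subset_univ _)
          _ = volume (Set.Icc (-1:ℝ) 1) := by rw [hμ, Measure.restrict_apply_univ]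
          _ = ENNReal.ofReal 2 := by rw [Real.volume_Icc]; norm_num
      calc (μ {a | t < g a}).toReal ≤ (ENNReal.ofReal 2).toReal :=
            ENNReal.toReal_mono ENNReal.ofReal_ne_top h1
        _ = 2 := ENNReal.toReal_ofReal (by norm_num)
    · set l : ℝ := t ^ (-(1/ε)) with hl
      have hlpos : 0 < l := Real.rpow_pos_of_pos ht _
      set E := {x | x ∈ Set.Icc (-1:ℝ) 1 ∧ |Q.eval x| ≤ l} with hE
      have hEfin : volume E ≠ ⊤ := by
        have h1 : volume E ≤ volume (Set.Icc (-1:ℝ) 1) :=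
          measure_mono fun x hx => hx.1
        have h2 : volume (Set.Icc (-1:ℝ) 1) < ⊤ := by
          rw [Real.volume_Icc]; exact ENNReal.ofReal_lt_top
        exact (h1.trans_lt h2).ne
      have hsub : {a | t < g a} ∩ Set.Icc (-1:ℝ) 1 ⊆ E := by
        rintro x ⟨hx1, hx2⟩
        refine ⟨hx2, ?_⟩
        by_cases hQx : Q.eval x = 0
        · rw [hQx, abs_zero]
          exact le_of_lt hlpos
        · have habs : 0 < |Q.eval x| := abs_pos.mpr hQx
          have hlt : t < g x := hx1
          have hstep : (g x) ^ (-(1/ε)) < t ^ (-(1/ε)) :=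
            Real.rpow_lt_rpow_of_neg ht hlt (neg_lt_zero.mpr (by positivity))
          have hcol : (g x) ^ (-(1/ε)) = |Q.eval x| := by
            simp only [hg]
            rw [← Real.rpow_mul (abs_nonneg _)]
            rw [show (-ε) * (-(1/ε)) = 1 by field_simp]
            exact Real.rpow_one _
          rw [hcol] at hstep
          exact le_of_lt hstep
      have hμle : (μ {a | t < g a}).toReal ≤ (volume E).toReal := by
        have h1 : μ {a | t < g a} ≤ volume E := by
          rw [hμ, Measure.restrict_apply' measurableSet_Icc]
          exact measure_mono hsub
        exact ENNReal.toReal_mono hEfin h1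
      have hsb := hCbound Q hQ l (le_of_lt hlpos)
      set δ := (volume E).toReal with hδ
      have hδnn : 0 ≤ δ := ENNReal.toReal_nonneg
      have h2 : δ ^ ((d:ℕ):ℝ) ≤ C * l / N := by
        rw [Real.rpow_natCast, le_div_iff₀ hNpos]
        exact hsb
      have h3 : δ ≤ (C * l / N) ^ ((d:ℝ)⁻¹) := by
        have h4 := Real.rpow_le_rpow (Real.rpow_nonneg hδnn _) h2
          (inv_nonneg.mpr (le_of_lt hdpos))
        rwa [← Real.rpow_mul hδnn, mul_inv_cancel₀ hdpos.ne', Real.rpow_one] at h4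
      have h5 : (C * l / N) ^ ((d:ℝ)⁻¹) = K * t ^ (-p) := by
        rw [Real.div_rpow (by positivity) (le_of_lt hNpos),
          Real.mul_rpow (le_of_lt hC0) (le_of_lt hlpos), hl,
          ← Real.rpow_mul (le_of_lt ht), hK]
        rw [show (-(1/ε)) * (d:ℝ)⁻¹ = -p by rw [hp]; field_simp]
        ring
      exact hμle.trans (h3.trans (le_of_eq h5))
  -- integrability of h
  have hcont : ContinuousOn h (Set.Ioi (0:ℝ)) := by
    intro x hx
    have h1 : ContinuousWithinAt (fun t : ℝ => t ^ (-p)) (Set.Ioi 0) x :=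
      (Real.continuousAt_rpow_const x (-p) (Or.inl (ne_of_gt hx))).continuousWithinAt
    exact Filter.Tendsto.min continuousWithinAt_const (continuousWithinAt_const.mul h1)
  set t₀ : ℝ := N ^ (-ε) with ht₀
  have ht₀pos : 0 < t₀ := Real.rpow_pos_of_pos hNpos _
  have hconst : IntegrableOn (fun _ => (2:ℝ)) (Set.Ioc 0 t₀) :=
    (integrableOn_const_iff).mpr (Or.inr (by rw [Real.volume_Ioc]; exact ENNReal.ofReal_lt_top))
  have hIoc : IntegrableOn h (Set.Ioc 0 t₀) := by
    apply hconst.mono' ((hcont.mono Set.Ioc_subset_Ioi_self).aestronglyMeasurable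
      measurableSet_Ioc)
    refine (ae_restrict_iff' measurableSet_Ioc).mpr (Filter.Eventually.of_forall fun x hx => ?_)
    ·
      have hx0 : 0 < x := hx.1
      have hxp : 0 < K * x ^ (-p) := by
        have := Real.rpow_pos_of_pos hx0 (-p)
        positivity
      rw [Real.norm_eq_abs, abs_of_nonneg (le_min (by norm_num) (le_of_lt hxp))]
      exact min_le_left _ _
  have hIoiT : IntegrableOn (fun t => K * t ^ (-p)) (Set.Ioi t₀) :=
    (integrableOn_Ioi_rpow_of_lt (by linarith : -p < -1) ht₀pos).const_mul K
  have hIoi : IntegrableOn h (Set.Ioi t₀) := by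
    apply hIoiT.mono' ((hcont.mono (Set.Ioi_subset_Ioi (le_of_lt ht₀pos))).aestronglyMeasurable
      measurableSet_Ioi)
    refine (ae_restrict_iff' measurableSet_Ioi).mpr (Filter.Eventually.of_forall fun x hx => ?_)
    have hx0 : 0 < x := ht₀pos.trans hx
    have hxp : 0 < K * x ^ (-p) := by
      have := Real.rpow_pos_of_pos hx0 (-p)
      positivity
    rw [Real.norm_eq_abs, abs_of_nonneg (le_min (by norm_num) (le_of_lt hxp))]
    exact min_le_right _ _
  have hIoi0 : IntegrableOn h (Set.Ioi 0) := by
    rw [← Set.Ioc_union_Ioi_eq_Ioi (le_of_lt ht₀pos)]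
    exact hIoc.union hIoi
  have hcmp : ∫ t in Set.Ioi (0:ℝ), (μ {a | t < g a}).toReal ≤ ∫ t in Set.Ioi (0:ℝ), h t := by
    apply integral_mono_of_nonneg
    · exact Filter.Eventually.of_forall fun t => ENNReal.toReal_nonneg
    · exact hIoi0
    · exact (ae_restrict_iff' measurableSet_Ioi).mpr
        (Filter.Eventually.of_forall fun t ht => hbound t ht)
  have hsplit : ∫ t in Set.Ioi (0:ℝ), h t =
      (∫ t in Set.Ioc (0:ℝ) t₀, h t) + ∫ t in Set.Ioi t₀, h t := by
    rw [← setIntegral_union Set.Ioc_disjoint_Ioi_same measurableSet_Ioi hIoc hIoi,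
      Set.Ioc_union_Ioi_eq_Ioi (le_of_lt ht₀pos)]
  have hpart1 : ∫ t in Set.Ioc (0:ℝ) t₀, h t ≤ 2 * t₀ := by
    calc ∫ t in Set.Ioc (0:ℝ) t₀, h t ≤ ∫ _t in Set.Ioc (0:ℝ) t₀, (2:ℝ) := by
          refine setIntegral_mono_on hIoc ?_ measurableSet_Ioc fun x hx => min_le_left _ _
          exact (integrableOn_const_iff).mpr (Or.inr (by rw [Real.volume_Ioc]; exact ENNReal.ofReal_lt_top))
      _ = 2 * t₀ := by
          rw [setIntegral_const, Real.volume_real_Ioc_of_le (le_of_lt ht₀pos), smul_eq_mul]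
          ring
  have hval : ∫ t in Set.Ioi t₀, t ^ (-p) = -t₀ ^ (-p + 1) / (-p + 1) :=
    integral_Ioi_rpow_of_lt (by linarith) ht₀pos
  have hpart2 : ∫ t in Set.Ioi t₀, h t ≤ K * (t₀ ^ (1 - p) / (p - 1)) := by
    calc ∫ t in Set.Ioi t₀, h t ≤ ∫ t in Set.Ioi t₀, K * t ^ (-p) :=
          setIntegral_mono_on hIoi hIoiT measurableSet_Ioi fun x hx => min_le_right _ _
      _ = K * ∫ t in Set.Ioi t₀, t ^ (-p) := integral_const_mul K _
      _ = K * (-t₀ ^ (-p + 1) / (-p + 1)) := by rw [hval]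
      _ = K * (t₀ ^ (1 - p) / (p - 1)) := by
          rw [show -p + 1 = -(p - 1) by ring, neg_div_neg_eq, show -(p-1) = 1 - p by ring]
  have hKt : K * t₀ ^ (1 - p) = C ^ ((d:ℝ)⁻¹) * N ^ (-ε) := by
    rw [hK, ht₀, ← Real.rpow_mul (le_of_lt hNpos), div_eq_mul_inv,
      ← Real.rpow_neg (le_of_lt hNpos), mul_assoc, ← Real.rpow_add hNpos]
    have hε0' : ε ≠ 0 := ne_of_gt hε₀
    have hd0' : (d:ℝ) ≠ 0 := hdpos.ne'
    have hexp : -((d:ℝ))⁻¹ + -ε * (1 - p) = -ε := by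
      rw [hp]
      field_simp
      ring
    rw [hexp]
  calc ∫ t in Set.Ioi (0:ℝ), (μ {a | t < g a}).toReal ≤ ∫ t in Set.Ioi (0:ℝ), h t := hcmp
    _ = (∫ t in Set.Ioc (0:ℝ) t₀, h t) + ∫ t in Set.Ioi t₀, h t := hsplit
    _ ≤ 2 * t₀ + K * (t₀ ^ (1 - p) / (p - 1)) := add_le_add hpart1 hpart2
    _ = A * N ^ (-ε) := by
        rw [hA, ht₀, ← mul_div_assoc, hKt]
        ring
end

section
/- Unboundedness when P'(0) ≠ 0: let λ > 0, K(x) = (sin(log|x|)/(x log|x|)) χ_{(-∞,0)}(x), and f(x) = π^{-1} λ (χ_{[0, π/(2λ)]}(x) - χ_{[-π/(2λ), 0]}(x)). Define T^+ f(x) = p.v. ∫_x^∞ e^{iλ(x-y)} K(x-y) f(y) dy. Then ∫_ℝ |T^+ f(x)| dx = ∞; in particular T^+ f ∉ L^1(ℝ), even though f is a bounded compactly supported function with mean zero. -/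
open MeasureTheory Set Filter

/-- The kernel `K(x) = (sin(log|x|)/(x log|x|)) χ_{(-∞,0)}(x)`. -/
noncomputable def Kker (x : ℝ) : ℝ :=
  if x < 0 then Real.sin (Real.log |x|) / (x * Real.log |x|) else 0

/-- The function `f(x) = π⁻¹ λ (χ_{[0,π/(2λ)]}(x) - χ_{[-π/(2λ),0]}(x))`. -/
noncomputable def fosc (lam : ℝ) (x : ℝ) : ℝ :=
  (1 / Real.pi) * lam *
    (Set.indicator (Set.Icc 0 (Real.pi / (2 * lam))) (fun _ => (1 : ℝ)) x -
      Set.indicator (Set.Icc (-(Real.pi / (2 * lam))) 0) (fun _ => (1 : ℝ)) x)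

lemma fosc_eq_zero_left {lam y : ℝ} (h : y < -(Real.pi / (2 * lam))) (hb : 0 < Real.pi / (2*lam)) :
    fosc lam y = 0 := by
  have h1 : y ∉ Set.Icc (0:ℝ) (Real.pi / (2*lam)) := by
    intro hy; exact absurd hy.1 (by nlinarith)
  have h2 : y ∉ Set.Icc (-(Real.pi / (2*lam))) (0:ℝ) := by
    intro hy; exact absurd hy.1 (by linarith)
  simp [fosc, Set.indicator_of_notMem h1, Set.indicator_of_notMem h2]

lemma fosc_eq_zero_right {lam y : ℝ} (h : Real.pi / (2 * lam) < y) (hb : 0 < Real.pi / (2*lam)) :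
    fosc lam y = 0 := by
  have h1 : y ∉ Set.Icc (0:ℝ) (Real.pi / (2*lam)) := by
    intro hy; exact absurd hy.2 (by linarith)
  have h2 : y ∉ Set.Icc (-(Real.pi / (2*lam))) (0:ℝ) := by
    intro hy; exact absurd hy.2 (by nlinarith)
  simp [fosc, Set.indicator_of_notMem h1, Set.indicator_of_notMem h2]

lemma abs_fosc_le {lam : ℝ} (hlam : 0 < lam) (y : ℝ) :
    |fosc lam y| ≤ Set.indicator (Set.Icc (-(Real.pi / (2*lam))) (Real.pi / (2*lam)))
      (fun _ => lam / Real.pi) y := by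
  have hb : 0 < Real.pi / (2*lam) := div_pos Real.pi_pos (by linarith)
  by_cases hy : y ∈ Set.Icc (-(Real.pi / (2*lam))) (Real.pi / (2*lam))
  · rw [Set.indicator_of_mem hy]
    have h1 : Set.indicator (Set.Icc 0 (Real.pi / (2 * lam))) (fun _ => (1 : ℝ)) y ∈
        Set.Icc (0:ℝ) 1 := by
      by_cases h' : y ∈ Set.Icc (0:ℝ) (Real.pi/(2*lam)) <;> simp [Set.indicator_apply, h']
    have h2 : Set.indicator (Set.Icc (-(Real.pi / (2*lam))) 0) (fun _ => (1 : ℝ)) y ∈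
        Set.Icc (0:ℝ) 1 := ⟨Set.indicator_nonneg (by simp) y, by
          by_cases h' : y ∈ Set.Icc (-(Real.pi/(2*lam))) (0:ℝ) <;> simp [Set.indicator_apply, h']⟩
    rw [fosc, abs_mul]
    have hpi := Real.pi_pos
    have : |1 / Real.pi * lam| = lam / Real.pi := by
      rw [abs_of_pos (by positivity)]; ring
    rw [this]
    have : |Set.indicator (Set.Icc 0 (Real.pi / (2 * lam))) (fun _ => (1 : ℝ)) y -
        Set.indicator (Set.Icc (-(Real.pi / (2*lam))) 0) (fun _ => (1 : ℝ)) y| ≤ 1 := by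
      rw [abs_le]; constructor <;> [linarith [h1.1, h2.2]; linarith [h1.2, h2.1]]
    nlinarith [div_pos hlam Real.pi_pos]
  · rw [Set.indicator_of_notMem hy]
    rw [Set.mem_Icc, not_and_or, not_le, not_le] at hy
    rcases hy with h | h
    · rw [fosc_eq_zero_left (by linarith) hb]; simp
    · rw [fosc_eq_zero_right (by linarith) hb]; simp

lemma measurable_fosc (lam : ℝ) : Measurable (fosc lam) := by
  apply Measurable.const_mul
  exact ((measurable_const.indicator measurableSet_Icc).sub
    (measurable_const.indicator measurableSet_Icc))

lemma measurable_Kker : Measurable Kker := by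
  apply Measurable.ite measurableSet_Iio
  · exact ((Real.measurable_sin.comp (Real.measurable_log.comp measurable_abs))).div
      (measurable_id.mul (Real.measurable_log.comp measurable_abs))
  · exact measurable_const

lemma Kker_of_neg {t : ℝ} (ht : t < 0) :
    Kker t = Real.sin (Real.log (-t)) / (t * Real.log (-t)) := by
  rw [Kker, if_pos ht, abs_of_neg ht]

lemma one_le_log_of {t : ℝ} (ht : t ≤ -Real.exp 1) : 1 ≤ Real.log (-t) := by
  have h1 : Real.exp 1 ≤ -t := by linarith
  have h0 : (0:ℝ) < Real.exp 1 := Real.exp_pos 1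
  rw [← Real.log_exp 1]
  exact Real.log_le_log (by positivity) h1

lemma abs_Kker_le_one {t : ℝ} (ht : t ≤ -Real.exp 1) : |Kker t| ≤ 1 := by
  have h0 : (0:ℝ) < Real.exp 1 := Real.exp_pos 1
  have htneg : t < 0 := by linarith
  have hL : 1 ≤ Real.log (-t) := one_le_log_of ht
  rw [Kker_of_neg htneg, abs_div, abs_mul]
  have h2 : (1:ℝ) ≤ |t| * |Real.log (-t)| := by
    have : (1:ℝ) ≤ |t| := by rw [abs_of_neg htneg]; nlinarith [Real.add_one_le_exp 1]
    have h3 : (1:ℝ) ≤ |Real.log (-t)| := by rwa [abs_of_pos (by linarith)]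
    nlinarith
  calc |Real.sin (Real.log (-t))| / (|t| * |Real.log (-t)|)
      ≤ 1 / (|t| * |Real.log (-t)|) := by
        gcongr
        exact Real.abs_sin_le_one _
    _ ≤ 1 := by rw [div_le_one (by linarith)]; exact h2

lemma hasDerivAt_Kker {t : ℝ} (ht : t < -1) :
    HasDerivAt Kker ((Real.log (-t) * Real.cos (Real.log (-t)) -
      (Real.log (-t) + 1) * Real.sin (Real.log (-t))) / (t * Real.log (-t))^2) t := by
  have htneg : t < 0 := by linarith
  have htne : t ≠ 0 := ne_of_lt htneg
  have hmt : (1:ℝ) < -t := by linarith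
  have hLpos : 0 < Real.log (-t) := Real.log_pos hmt
  have hL : HasDerivAt (fun u : ℝ => Real.log (-u)) t⁻¹ t := by
    have := (Real.hasDerivAt_log (by linarith : -t ≠ 0)).comp t (hasDerivAt_neg t)
    simpa [Function.comp_def, -Real.log_neg_eq_log] using this
  have hnum : HasDerivAt (fun u : ℝ => Real.sin (Real.log (-u)))
      (Real.cos (Real.log (-t)) * t⁻¹) t := (Real.hasDerivAt_sin _).comp t hL
  have hden : HasDerivAt (fun u : ℝ => u * Real.log (-u))
      (Real.log (-t) + 1) t := by
    have := (hasDerivAt_id' t).mul hL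
    exact this.congr_deriv (by rw [mul_inv_cancel₀ htne]; ring)
  have hdne : t * Real.log (-t) ≠ 0 := (mul_neg_of_neg_of_pos htneg hLpos).ne
  have hdiv := hnum.div hden hdne
  have heq : (Real.cos (Real.log (-t)) * t⁻¹ * (t * Real.log (-t)) -
      Real.sin (Real.log (-t)) * (Real.log (-t) + 1)) / (t * Real.log (-t)) ^ 2 =
      (Real.log (-t) * Real.cos (Real.log (-t)) -
        (Real.log (-t) + 1) * Real.sin (Real.log (-t))) / (t * Real.log (-t)) ^ 2 := by
    rw [div_eq_div_iff (by positivity) (by positivity)]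
    field_simp
  rw [heq] at hdiv
  exact hdiv.congr_of_eventuallyEq
    (Filter.eventually_of_mem (Iio_mem_nhds htneg) (fun u hu => Kker_of_neg hu))

lemma abs_derivK_le {t : ℝ} (ht : t ≤ -Real.exp 1) :
    |(Real.log (-t) * Real.cos (Real.log (-t)) -
      (Real.log (-t) + 1) * Real.sin (Real.log (-t))) / (t * Real.log (-t))^2| ≤ 3 / t^2 := by
  have hL : 1 ≤ Real.log (-t) := one_le_log_of ht
  have hexp : (2:ℝ) ≤ Real.exp 1 := by nlinarith [Real.add_one_le_exp 1]
  have htlt : t ≤ -2 := by linarith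
  have ht2 : (1:ℝ) ≤ t^2 := by nlinarith
  set L := Real.log (-t) with hLdef
  have hnum : |L * Real.cos L - (L + 1) * Real.sin L| ≤ 2*L + 1 := by
    calc |L * Real.cos L - (L + 1) * Real.sin L|
        ≤ |L * Real.cos L| + |(L + 1) * Real.sin L| := abs_sub _ _
      _ ≤ L * 1 + (L+1) * 1 := by
          rw [abs_mul, abs_mul, abs_of_nonneg (by linarith : (0:ℝ) ≤ L),
            abs_of_nonneg (by linarith : (0:ℝ) ≤ L+1)]
          have h1 := Real.abs_cos_le_one L
          have h2 := Real.abs_sin_le_one L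
          have h3 := abs_nonneg (Real.cos L)
          have h4 := abs_nonneg (Real.sin L)
          nlinarith
      _ = 2*L + 1 := by ring
  have htL : t * L < 0 := mul_neg_of_neg_of_pos (by linarith) (by linarith)
  have hden : (0:ℝ) < (t*L)^2 := by nlinarith
  rw [abs_div, abs_of_nonneg (sq_nonneg (t * L))]
  rw [div_le_div_iff₀ hden (by positivity)]
  have hexpand : (t * L)^2 = t^2 * L^2 := by ring
  nlinarith [sq_nonneg t, sq_nonneg L, sq_nonneg (L-1), mul_pos (by positivity : (0:ℝ) < t^2) (by positivity : (0:ℝ) < L^2)]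

lemma Kker_lip {x B : ℝ} (hB : 0 ≤ B) (hxB : x + B ≤ -Real.exp 1) {y : ℝ} (hy : |y| ≤ B) :
    |Kker (x - y) - Kker x| ≤ 3 / (x+B)^2 * B := by
  have hexp : (2:ℝ) ≤ Real.exp 1 := by nlinarith [Real.add_one_le_exp 1]
  have hxBneg : x + B < 0 := by linarith
  set s : Set ℝ := Icc (x - B) (x + B) with hs
  have hmem : ∀ t ∈ s, t ≤ -Real.exp 1 := fun t htm => le_trans htm.2 hxB
  have hderiv : ∀ t ∈ s, HasDerivWithinAt Kker
      ((Real.log (-t) * Real.cos (Real.log (-t)) -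
        (Real.log (-t) + 1) * Real.sin (Real.log (-t))) / (t * Real.log (-t))^2) s t :=
    fun t htm => (hasDerivAt_Kker (by have := hmem t htm; linarith)).hasDerivWithinAt
  have hbound : ∀ t ∈ s, ‖(Real.log (-t) * Real.cos (Real.log (-t)) -
      (Real.log (-t) + 1) * Real.sin (Real.log (-t))) / (t * Real.log (-t))^2‖ ≤ 3/(x+B)^2 := by
    intro t htm
    rw [Real.norm_eq_abs]
    refine (abs_derivK_le (hmem t htm)).trans ?_
    have h1 : (x+B)^2 ≤ t^2 := by nlinarith [htm.2, hmem t htm]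
    exact div_le_div_of_nonneg_left (by norm_num) (by nlinarith) h1
  have hxmem : x ∈ s := ⟨by linarith, by linarith⟩
  have hymem : x - y ∈ s := by
    rcases abs_le.1 hy with ⟨h1, h2⟩
    exact ⟨by linarith, by linarith⟩
  have h := (convex_Icc (x-B) (x+B)).norm_image_sub_le_of_norm_hasDerivWithin_le hderiv hbound hxmem hymem
  rw [Real.norm_eq_abs, Real.norm_eq_abs] at h
  have h2 : |x - y - x| = |y| := by rw [show x - y - x = -y by ring, abs_neg]
  rw [h2] at h
  refine h.trans ?_
  have : (0:ℝ) ≤ 3/(x+B)^2 := by positivity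
  nlinarith

lemma sin_ge_sqrt2 {v : ℝ} (h1 : Real.pi/4 ≤ v) (h2 : v ≤ 3*Real.pi/4) :
    Real.sqrt 2 / 2 ≤ Real.sin v := by
  have hpi := Real.pi_pos
  rcases le_total v (Real.pi/2) with h | h
  · rw [← Real.sin_pi_div_four]
    exact Real.strictMonoOn_sin.monotoneOn ⟨by linarith, by linarith⟩ ⟨by linarith, h⟩ h1
  · rw [← Real.sin_pi_sub, ← Real.sin_pi_div_four]
    exact Real.strictMonoOn_sin.monotoneOn ⟨by linarith, by linarith⟩
      ⟨by linarith, by linarith⟩ (by linarith)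

lemma abs_Kker_ge {n : ℕ} {x : ℝ}
    (hx : x ∈ Icc (-(Real.exp ((n:ℝ) * Real.pi + 3*Real.pi/4)))
      (-(Real.exp ((n:ℝ) * Real.pi + Real.pi/4)))) :
    Real.sqrt 2 / 2 / (Real.exp ((n:ℝ) * Real.pi + 3*Real.pi/4) *
      ((n:ℝ) * Real.pi + 3*Real.pi/4)) ≤ |Kker x| := by
  have hpi := Real.pi_pos
  set a := (n:ℝ) * Real.pi + Real.pi/4 with ha
  set b := (n:ℝ) * Real.pi + 3*Real.pi/4 with hbdef
  have hnn : (0:ℝ) ≤ (n:ℝ) := Nat.cast_nonneg n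
  have hapos : 0 < a := by positivity
  have hbpos : 0 < b := by positivity
  have hA : (1:ℝ) < Real.exp a := by
    rw [← Real.exp_zero]; exact Real.exp_lt_exp.2 hapos
  have hxneg : x < 0 := by
    rcases hx with ⟨_, h2⟩; nlinarith [Real.exp_pos a, h2]
  have hmx : Real.exp a ≤ -x := by rcases hx with ⟨_, h2⟩; linarith
  have hmx2 : -x ≤ Real.exp b := by rcases hx with ⟨h1, _⟩; linarith
  have hLlb : a ≤ Real.log (-x) := by
    rw [← Real.log_exp a]; exact Real.log_le_log (Real.exp_pos a) hmx
  have hLub : Real.log (-x) ≤ b := by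
    rw [← Real.log_exp b]; exact Real.log_le_log (by linarith) hmx2
  set L := Real.log (-x) with hL
  have hLpos : 0 < L := lt_of_lt_of_le hapos hLlb
  -- |sin L| ≥ √2/2
  have hsin : Real.sqrt 2 / 2 ≤ |Real.sin L| := by
    have hv1 : Real.pi/4 ≤ L - (n:ℝ) * Real.pi := by rw [ha] at hLlb; linarith
    have hv2 : L - (n:ℝ) * Real.pi ≤ 3*Real.pi/4 := by rw [hbdef] at hLub; linarith
    have : Real.sin L = (-1)^n * Real.sin (L - (n:ℝ)*Real.pi) := by
      rw [← Real.sin_add_nat_mul_pi (L - (n:ℝ)*Real.pi) n]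
      ring_nf
    rw [this, abs_mul, abs_pow, abs_neg, abs_one, one_pow, one_mul,
      abs_of_nonneg (le_trans (by positivity) (sin_ge_sqrt2 hv1 hv2))]
    exact sin_ge_sqrt2 hv1 hv2
  rw [Kker_of_neg hxneg, abs_div, abs_mul, abs_of_neg hxneg, abs_of_pos hLpos]
  apply div_le_div₀ (abs_nonneg _) hsin (mul_pos (by linarith) hLpos)
  have h1 : -x ≤ Real.exp b := hmx2
  nlinarith [Real.exp_pos b]

lemma not_integrableOn_Kker {M : ℝ} (hM : 1 ≤ M) : ¬ IntegrableOn Kker (Iic (-M)) := by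
  intro h
  have hpi := Real.pi_pos
  have hpi1 : (1:ℝ) ≤ Real.pi := by nlinarith [Real.pi_gt_three]
  have habs : IntegrableOn (fun x => |Kker x|) (Iic (-M)) := h.abs
  set k0 : ℕ := ⌈Real.log M⌉₊ with hk0
  set E : ℝ := Real.exp (-(Real.pi/2)) with hE
  have hE1 : E < 1 := by rw [hE, ← Real.exp_zero]; exact Real.exp_lt_exp.2 (by linarith)
  have hEpos : 0 < E := Real.exp_pos _
  set c0 : ℝ := Real.sqrt 2 / 2 * (1 - E) / Real.pi with hc0
  have hc0pos : 0 < c0 := by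
    apply div_pos (mul_pos (by positivity) (by linarith)) hpi
  set aa : ℕ → ℝ := fun k => ((k0 + k : ℕ) : ℝ) * Real.pi + Real.pi/4 with haa
  set bb : ℕ → ℝ := fun k => ((k0 + k : ℕ) : ℝ) * Real.pi + 3*Real.pi/4 with hbb
  set J : ℕ → Set ℝ := fun k => Icc (-(Real.exp (bb k))) (-(Real.exp (aa k))) with hJ
  have hab : ∀ k, aa k < bb k := fun k => by
    simp only [haa, hbb]; linarith
  have hsubset : ∀ k, J k ⊆ Iic (-M) := by
    intro k x hx
    have h1 : Real.log M ≤ aa k := by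
      have h2 : Real.log M ≤ (k0 : ℝ) := Nat.le_ceil (Real.log M)
      have h3 : (k0 : ℝ) ≤ ((k0 + k : ℕ) : ℝ) := by exact_mod_cast Nat.le_add_right k0 k
      have h4 : ((k0 + k : ℕ) : ℝ) ≤ ((k0 + k : ℕ) : ℝ) * Real.pi := by
        nlinarith [(Nat.cast_nonneg (k0 + k) : (0:ℝ) ≤ ((k0 + k : ℕ) : ℝ))]
      simp only [haa]; linarith
    have h5 : M ≤ Real.exp (aa k) := by
      rw [← Real.exp_log (by linarith : (0:ℝ) < M)]
      exact Real.exp_le_exp.2 h1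
    have := hx.2
    simp only [mem_Iic]
    linarith
  have hJint : ∀ k, IntegrableOn (fun x => |Kker x|) (J k) :=
    fun k => habs.mono_set (hsubset k)
  -- per-interval lower bound
  have key : ∀ k : ℕ, c0 / (((k0:ℝ)+1) * ((k:ℝ)+1)) ≤ ∫ x in J k, |Kker x| := by
    intro k
    have hlow := setIntegral_ge_of_const_le (μ := volume)
      (c := Real.sqrt 2 / 2 / (Real.exp (bb k) * bb k))
      (f := fun x => |Kker x|) measurableSet_Icc
      (by exact (measure_Icc_lt_top).ne)
      (fun x hx => abs_Kker_ge (n := k0 + k) (by simpa [haa, hbb] using hx))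
      (hJint k)
    refine le_trans ?_ hlow
    have hvol : (volume (J k)).toReal = Real.exp (bb k) - Real.exp (aa k) := by
      rw [hJ]
      simp only [Real.volume_Icc]
      rw [ENNReal.toReal_ofReal (by nlinarith [Real.exp_le_exp.2 (hab k).le])]
      ring
    rw [measureReal_def, hvol]
    have hBA : Real.exp (aa k) = Real.exp (bb k) * E := by
      rw [hE, ← Real.exp_add]
      congr 1
      simp only [haa, hbb]; ring
    rw [hBA]
    have hBpos : 0 < Real.exp (bb k) := Real.exp_pos _
    have hbbpos : 0 < bb k := by
      simp only [hbb]; positivity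
    have heq : Real.sqrt 2 / 2 / (Real.exp (bb k) * bb k) *
        (Real.exp (bb k) - Real.exp (bb k) * E) = Real.sqrt 2 / 2 * (1 - E) / bb k := by
      field_simp
    rw [smul_eq_mul, mul_comm (Real.exp (bb k) - _), heq]
    -- c0 / ((k0+1)(k+1)) ≤ (√2/2)(1-E)/bb k  since  bb k ≤ π (k0+1)(k+1)
    rw [hc0, div_div]
    apply div_le_div_of_nonneg_left (mul_nonneg (by positivity) (by linarith)) hbbpos
    have h1 : bb k ≤ (((k0 + k : ℕ) : ℝ) + 1) * Real.pi := by
      simp only [hbb]; nlinarith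
    refine h1.trans ?_
    have h2 : (((k0 + k : ℕ) : ℝ) + 1) ≤ ((k0:ℝ)+1) * ((k:ℝ)+1) := by
      push_cast
      nlinarith [(Nat.cast_nonneg k0 : (0:ℝ) ≤ (k0:ℝ)), (Nat.cast_nonneg k : (0:ℝ) ≤ (k:ℝ))]
    nlinarith
  -- disjointness
  have hdisj : ∀ i j : ℕ, i < j → Disjoint (J i) (J j) := by
    intro i j hij
    apply Set.disjoint_of_subset_left (Set.Icc_subset_Ici_self)
    apply Set.disjoint_of_subset_right (Set.Icc_subset_Iic_self)
    rw [Set.Ici_disjoint_Iic]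
    have : bb i < aa j := by
      simp only [haa, hbb]
      have hc : ((k0 + i : ℕ) : ℝ) + 1 ≤ ((k0 + j : ℕ) : ℝ) := by
        have : (k0 + i + 1 : ℕ) ≤ k0 + j := by omega
        exact_mod_cast this
      nlinarith [mul_le_mul_of_nonneg_right hc hpi.le]
    have := Real.exp_lt_exp.2 this
    push_neg
    linarith
  -- partial sums bounded
  have hsum : ∀ n : ℕ, ∑ k ∈ Finset.range n, c0 / (((k0:ℝ)+1) * ((k:ℝ)+1)) ≤
      ∫ x in Iic (-M), |Kker x| := by
    intro n
    calc ∑ k ∈ Finset.range n, c0 / (((k0:ℝ)+1) * ((k:ℝ)+1))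
        ≤ ∑ k ∈ Finset.range n, ∫ x in J k, |Kker x| :=
          Finset.sum_le_sum (fun k _ => key k)
      _ = ∫ x in ⋃ k ∈ Finset.range n, J k, |Kker x| := by
          rw [integral_biUnion_finset _ (fun k _ => measurableSet_Icc) ?_ (fun k _ => hJint k)]
          intro i _ j _ hij
          rcases hij.lt_or_gt with h | h
          · exact hdisj i j h
          · exact (hdisj j i h).symm
      _ ≤ ∫ x in Iic (-M), |Kker x| := by
          apply setIntegral_mono_set habs
          · exact Filter.Eventually.of_forall (fun x => abs_nonneg _)
          · exact HasSubset.Subset.eventuallyLE (Set.iUnion₂_subset (fun k _ => hsubset k))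
  -- divergence
  have hdiv : Tendsto (fun n => ∑ k ∈ Finset.range n, c0 / (((k0:ℝ)+1) * ((k:ℝ)+1)))
      atTop atTop := by
    have heq : ∀ n, ∑ k ∈ Finset.range n, c0 / (((k0:ℝ)+1) * ((k:ℝ)+1)) =
        (c0 / ((k0:ℝ)+1)) * ∑ k ∈ Finset.range n, 1 / ((k:ℝ)+1) := by
      intro n
      rw [Finset.mul_sum]
      apply Finset.sum_congr rfl
      intro k _
      rw [div_mul_div_comm, mul_one]
    simp_rw [heq]
    apply Tendsto.const_mul_atTop (by positivity)
    exact Real.tendsto_sum_range_one_div_nat_succ_atTop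
  obtain ⟨n, hn⟩ := (hdiv.eventually_gt_atTop (∫ x in Iic (-M), |Kker x|)).exists
  linarith [hsum n]

lemma integral_exp_fosc {lam : ℝ} (hlam : 0 < lam) :
    ∫ y : ℝ, Complex.exp (-(Complex.I * lam) * y) * (fosc lam y : ℂ) =
      -2 * Complex.I / Real.pi := by
  have hpi : (0:ℝ) < Real.pi := Real.pi_pos
  have hb : 0 < Real.pi / (2 * lam) := by positivity
  have hlamC : (lam : ℂ) ≠ 0 := by exact_mod_cast hlam.ne'
  have hpiC : (Real.pi : ℂ) ≠ 0 := by exact_mod_cast hpi.ne'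
  have hc : -(Complex.I * lam) ≠ 0 := by simp [Complex.I_ne_zero, hlamC]
  have hcont : Continuous fun y : ℝ => Complex.exp (-(Complex.I * lam) * y) :=
    Complex.continuous_exp.comp (continuous_const.mul Complex.continuous_ofReal)
  have hpt : ∀ y : ℝ, Complex.exp (-(Complex.I * lam) * y) * (fosc lam y : ℂ) =
      ((1/Real.pi * lam : ℝ) : ℂ) *
        ((Set.indicator (Set.Icc (0:ℝ) (Real.pi / (2*lam)))
            (fun y : ℝ => Complex.exp (-(Complex.I * lam) * y)) y) -
          (Set.indicator (Set.Icc (-(Real.pi / (2*lam))) (0:ℝ))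
            (fun y : ℝ => Complex.exp (-(Complex.I * lam) * y)) y)) := by
    intro y
    rw [fosc]
    by_cases h1 : y ∈ Set.Icc (0:ℝ) (Real.pi / (2*lam)) <;>
      by_cases h2 : y ∈ Set.Icc (-(Real.pi / (2*lam))) (0:ℝ) <;>
      simp [Set.indicator_of_mem, Set.indicator_of_notMem, h1, h2] <;>
      push_cast <;> ring
  rw [funext hpt, integral_const_mul]
  have hi1 : Integrable (Set.indicator (Set.Icc (0:ℝ) (Real.pi / (2*lam)))
      (fun y : ℝ => Complex.exp (-(Complex.I * lam) * y))) := by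
    rw [integrable_indicator_iff measurableSet_Icc]
    exact hcont.continuousOn.integrableOn_compact isCompact_Icc
  have hi2 : Integrable (Set.indicator (Set.Icc (-(Real.pi / (2*lam))) (0:ℝ))
      (fun y : ℝ => Complex.exp (-(Complex.I * lam) * y))) := by
    rw [integrable_indicator_iff measurableSet_Icc]
    exact hcont.continuousOn.integrableOn_compact isCompact_Icc
  rw [integral_sub hi1 hi2, integral_indicator measurableSet_Icc,
    integral_indicator measurableSet_Icc, integral_Icc_eq_integral_Ioc,
    integral_Icc_eq_integral_Ioc, ← intervalIntegral.integral_of_le hb.le,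
    ← intervalIntegral.integral_of_le (by linarith : -(Real.pi/(2*lam)) ≤ (0:ℝ)),
    integral_exp_mul_complex hc, integral_exp_mul_complex hc]
  have hval : (lam : ℂ) * ((Real.pi / (2*lam) : ℝ) : ℂ) = (Real.pi : ℂ) / 2 := by
    push_cast
    field_simp
  have hexp1 : Complex.exp (-(Complex.I * lam) * ((Real.pi / (2*lam) : ℝ) : ℂ)) =
      -Complex.I := by
    rw [show -(Complex.I * lam) * ((Real.pi / (2*lam) : ℝ) : ℂ) =
      -((lam : ℂ) * ((Real.pi / (2*lam) : ℝ) : ℂ)) * Complex.I by ring, hval]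
    rw [show -((Real.pi:ℂ)/2) * Complex.I = ((-(Real.pi/2) : ℝ) : ℂ) * Complex.I by push_cast; ring]
    rw [Complex.exp_mul_I]
    rw [← Complex.ofReal_cos, ← Complex.ofReal_sin]
    simp [Real.cos_pi_div_two, Real.sin_pi_div_two]
  have hexp2 : Complex.exp (-(Complex.I * lam) * ((-(Real.pi / (2*lam)) : ℝ) : ℂ)) =
      Complex.I := by
    rw [show -(Complex.I * lam) * ((-(Real.pi / (2*lam)) : ℝ) : ℂ) =
      ((lam : ℂ) * ((Real.pi / (2*lam) : ℝ) : ℂ)) * Complex.I by push_cast; ring, hval]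
    rw [show ((Real.pi:ℂ)/2) * Complex.I = (((Real.pi/2) : ℝ) : ℂ) * Complex.I by push_cast; ring]
    rw [Complex.exp_mul_I]
    rw [← Complex.ofReal_cos, ← Complex.ofReal_sin]
    simp [Real.cos_pi_div_two, Real.sin_pi_div_two]
  rw [hexp1, hexp2]
  rw [show -(Complex.I * (lam:ℂ)) * ((0:ℝ):ℂ) = 0 by push_cast; ring, Complex.exp_zero]
  rw [div_sub_div_same]
  rw [show (-Complex.I - 1) - (1 - Complex.I) = -2 by ring]
  field_simp
  ring_nf
  simp [Complex.I_sq]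

lemma integrableOn_inv_sq_Iic {c : ℝ} (hc : 0 < c) :
    IntegrableOn (fun x : ℝ => (x^2)⁻¹) (Iic (-c)) := by
  have h1 : IntegrableOn (fun t : ℝ => t ^ (-2:ℝ)) (Ioi c) :=
    integrableOn_Ioi_rpow_of_lt (by norm_num) hc
  have h2 : Integrable (Set.indicator (Ioi c) (fun t : ℝ => t ^ (-2:ℝ))) :=
    (integrable_indicator_iff measurableSet_Ioi).2 h1
  have h3 := h2.comp_neg
  have h4 : (fun x : ℝ => Set.indicator (Ioi c) (fun t : ℝ => t ^ (-2:ℝ)) (-x)) =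
      Set.indicator (Iio (-c)) (fun x : ℝ => (x^2)⁻¹) := by
    funext x
    by_cases hx : x < -c
    · rw [Set.indicator_of_mem (show -x ∈ Ioi c by simp only [mem_Ioi]; linarith),
        Set.indicator_of_mem (show x ∈ Iio (-c) from hx)]
      have hxpos : (0:ℝ) < -x := by linarith
      rw [Real.rpow_neg hxpos.le, show ((2:ℝ)) = ((2:ℕ):ℝ) by norm_num, Real.rpow_natCast]
      norm_num
    · rw [Set.indicator_of_notMem (show -x ∉ Ioi c by simp only [mem_Ioi]; push_neg; linarith [not_lt.1 hx]),
        Set.indicator_of_notMem (show x ∉ Iio (-c) from hx)]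
  rw [h4] at h3
  have h5 : IntegrableOn (fun x : ℝ => (x^2)⁻¹) (Iio (-c)) :=
    (integrable_indicator_iff measurableSet_Iio).1 h3
  rwa [IntegrableOn, Measure.restrict_congr_set Iio_ae_eq_Iic] at h5

lemma integrable_of_indicator_bound {h : ℝ → ℂ} (hm : AEStronglyMeasurable h volume)
    {A B C : ℝ} (hb : ∀ y, ‖h y‖ ≤ Set.indicator (Icc A B) (fun _ => C) y) :
    Integrable h := by
  apply Integrable.mono'
    (g := fun y => Set.indicator (Icc A B) (fun _ => C) y) ?_ hm (Eventually.of_forall hb)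
  exact (integrable_indicator_iff measurableSet_Icc).2
    (integrableOn_const measure_Icc_lt_top.ne)

/-- Unboundedness when `P'(0) ≠ 0`: with `P(x) = λx`, `λ > 0`, the principal-value
oscillatory integral `T⁺ f(x) = p.v. ∫_x^∞ e^{iλ(x-y)} K(x-y) f(y) dy` of the
bounded, compactly supported, mean-zero function `f = fosc λ` is not integrable:
`∫_ℝ |T⁺f| = ∞`. -/
theorem oscillatory_not_integrable_of_linear_phase (lam : ℝ) (hlam : 0 < lam)
    (g : ℝ → ℂ)
    (hg : ∀ x : ℝ, Filter.Tendsto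
      (fun ε : ℝ => ∫ y in Set.Ioi (x + ε),
        Complex.exp (Complex.I * (lam * (x - y))) * Kker (x - y) * fosc lam y)
      (nhdsWithin 0 (Set.Ioi 0)) (nhds (g x))) :
    ¬ Integrable g := by
  intro hInt
  have hpi : (0:ℝ) < Real.pi := Real.pi_pos
  have hexp3 : Real.exp 1 < 3 := lt_trans Real.exp_one_lt_d9 (by norm_num)
  have hexppos : (0:ℝ) < Real.exp 1 := Real.exp_pos 1
  set b : ℝ := Real.pi / (2 * lam) with hbdef
  have hb : 0 < b := by positivity
  set x0 : ℝ := 2*b + 9 with hx0def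
  have hx0 : 0 < x0 := by linarith
  set main : ℝ → ℂ := fun x =>
    Complex.exp (Complex.I * (lam * x)) * (Kker x : ℂ) * (-2*Complex.I/Real.pi) with hmaindef
  -- norm of the oscillating factor
  have hnexp : ∀ z : ℝ, ‖Complex.exp (Complex.I * (z:ℂ))‖ = 1 := by
    intro z
    rw [show Complex.I * (z:ℂ) = (z:ℂ) * Complex.I by ring]
    exact Complex.norm_exp_ofReal_mul_I z
  -- Step A : identification of g on Iic (-x0)
  have gF : ∀ x : ℝ, x ≤ -x0 → g x =
      ∫ y : ℝ, Complex.exp (Complex.I * (lam * ((x:ℝ) - y))) * (Kker (x - y) : ℂ) *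
        (fosc lam y : ℂ) := by
    intro x hx
    have h2 : Tendsto
        (fun ε : ℝ => ∫ y in Set.Ioi (x + ε),
          Complex.exp (Complex.I * (lam * (x - y))) * Kker (x - y) * fosc lam y)
        (nhdsWithin 0 (Set.Ioi 0))
        (nhds (∫ y : ℝ, Complex.exp (Complex.I * (lam * ((x:ℝ) - y))) * (Kker (x - y) : ℂ) *
          (fosc lam y : ℂ))) := by
      apply Filter.Tendsto.congr' ?_ tendsto_const_nhds
      apply Filter.eventuallyEq_of_mem (Ioo_mem_nhdsGT_of_mem (show (0:ℝ) ∈ Ico (0:ℝ) 1 by simp))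
      intro ε hε
      apply (setIntegral_eq_integral_of_forall_compl_eq_zero ?_).symm
      intro y hy
      have hy' : y ≤ x + ε := by simpa [mem_Ioi] using hy
      have hyb : y < -b := by
        have := hε.2
        simp only [hx0def] at hx
        linarith
      rw [fosc_eq_zero_left (by rw [← hbdef]; exact hyb) (by rw [← hbdef]; exact hb)]
      simp
    exact tendsto_nhds_unique (hg x) h2
  -- Step B : error bound
  have stepB : ∀ x : ℝ, x ≤ -x0 → ‖g x - main x‖ ≤ 12*b*(x^2)⁻¹ := by
    intro x hx
    have hxb : x + b ≤ -Real.exp 1 := by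
      simp only [hx0def] at hx
      linarith
    have hxneg : x < 0 := by linarith
    set G1 : ℝ → ℂ := fun y =>
      Complex.exp (Complex.I * (lam * ((x:ℝ) - y))) * (Kker x : ℂ) * (fosc lam y : ℂ) with hG1def
    set G2 : ℝ → ℂ := fun y =>
      Complex.exp (Complex.I * (lam * ((x:ℝ) - y))) * ((Kker (x - y) - Kker x : ℝ) : ℂ) *
        (fosc lam y : ℂ) with hG2def
    have hmeas_exp : Measurable fun y : ℝ =>
        Complex.exp (Complex.I * ((lam:ℂ) * ((x:ℂ) - (y:ℂ)))) := by
      apply Complex.measurable_exp.comp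
      apply Measurable.const_mul
      exact (measurable_const.sub (Complex.measurable_ofReal.comp measurable_id)).const_mul _
    have hmeasG1 : AEStronglyMeasurable G1 volume := by
      apply Measurable.aestronglyMeasurable
      exact (hmeas_exp.mul measurable_const).mul
        ((Complex.measurable_ofReal.comp (measurable_fosc lam)))
    have hmeasG2 : AEStronglyMeasurable G2 volume := by
      apply Measurable.aestronglyMeasurable
      apply Measurable.mul
      · apply hmeas_exp.mul
        apply Complex.measurable_ofReal.comp
        exact (measurable_Kker.comp (measurable_const.sub measurable_id)).sub measurable_const
      · exact Complex.measurable_ofReal.comp (measurable_fosc lam)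
    -- pointwise norms
    have hnG1 : ∀ y : ℝ, ‖G1 y‖ = |Kker x| * |fosc lam y| := by
      intro y
      rw [hG1def]
      simp only [norm_mul, Complex.norm_real]
      rw [show Complex.I * ((lam:ℂ) * ((x:ℂ) - (y:ℂ))) = Complex.I * ((lam * (x - y) : ℝ) : ℂ)
        by push_cast; ring, hnexp]
      simp [Real.norm_eq_abs]
    have hnG2 : ∀ y : ℝ, ‖G2 y‖ = |Kker (x - y) - Kker x| * |fosc lam y| := by
      intro y
      rw [hG2def]
      simp only [norm_mul, Complex.norm_real]
      rw [show Complex.I * ((lam:ℂ) * ((x:ℂ) - (y:ℂ))) = Complex.I * ((lam * (x - y) : ℝ) : ℂ)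
        by push_cast; ring, hnexp]
      simp [Real.norm_eq_abs]
    have hKx : |Kker x| ≤ 1 := abs_Kker_le_one (by linarith)
    have hlip : ∀ y : ℝ, |y| ≤ b → |Kker (x - y) - Kker x| ≤ 3/(x+b)^2 * b :=
      fun y hy => Kker_lip hb.le hxb hy
    -- integrability
    have hintG1 : Integrable G1 := by
      apply integrable_of_indicator_bound hmeasG1 (A := -b) (B := b) (C := lam/Real.pi)
      intro y
      rw [hnG1 y]
      calc |Kker x| * |fosc lam y| ≤ 1 * |fosc lam y| := by
            apply mul_le_mul_of_nonneg_right hKx (abs_nonneg _)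
        _ = |fosc lam y| := one_mul _
        _ ≤ _ := by
            have := abs_fosc_le hlam y
            rwa [← hbdef] at this
    have hintG2 : Integrable G2 := by
      apply integrable_of_indicator_bound hmeasG2 (A := -b) (B := b)
        (C := (3/(x+b)^2*b) * (lam/Real.pi))
      intro y
      rw [hnG2 y]
      by_cases hy : y ∈ Icc (-b) b
      · rw [Set.indicator_of_mem hy]
        apply mul_le_mul (hlip y (abs_le.2 ⟨hy.1, hy.2⟩)) ?_ (abs_nonneg _) (by positivity)
        have := abs_fosc_le hlam y
        rwa [← hbdef, Set.indicator_of_mem hy] at this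
      · have hy0 : fosc lam y = 0 := by
          rw [mem_Icc, not_and_or, not_le, not_le] at hy
          rcases hy with h | h
          · exact fosc_eq_zero_left (by rw [← hbdef]; linarith) (by rw [← hbdef]; exact hb)
          · exact fosc_eq_zero_right (by rw [← hbdef]; exact h) (by rw [← hbdef]; exact hb)
        rw [Set.indicator_of_notMem hy, hy0]
        simp
    -- splitting
    have hsplit : (fun y : ℝ => Complex.exp (Complex.I * (lam * ((x:ℝ) - y))) *
        (Kker (x - y) : ℂ) * (fosc lam y : ℂ)) = fun y => G1 y + G2 y := by
      funext y
      rw [hG1def, hG2def]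
      push_cast
      ring
    -- value of ∫ G1
    have hintval : ∫ y : ℝ, G1 y = main x := by
      have hsplitexp : ∀ y:ℝ, Complex.exp (Complex.I * ((lam:ℂ) * ((x:ℂ) - y))) =
          Complex.exp (Complex.I*((lam:ℂ)*(x:ℂ))) * Complex.exp (-(Complex.I*lam)*(y:ℂ)) := by
        intro y; rw [← Complex.exp_add]; congr 1; push_cast; ring
      have : G1 = fun y : ℝ => (Complex.exp (Complex.I * (lam * (x:ℂ))) * (Kker x : ℂ)) *
          (Complex.exp (-(Complex.I * lam) * (y:ℂ)) * (fosc lam y : ℂ)) := by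
        funext y
        simp only [hG1def]
        rw [hsplitexp y]
        try ring
      rw [this, integral_const_mul, integral_exp_fosc hlam, hmaindef]
      try ring
    -- error bound
    have herr : ‖∫ y : ℝ, G2 y‖ ≤ (3/(x+b)^2*b) * (lam/Real.pi) * (2*b) := by
      have hbnd : ∀ y : ℝ, ‖G2 y‖ ≤
          Set.indicator (Icc (-b) b) (fun _ => (3/(x+b)^2*b) * (lam/Real.pi)) y := by
        intro y
        rw [hnG2 y]
        by_cases hy : y ∈ Icc (-b) b
        · rw [Set.indicator_of_mem hy]
          apply mul_le_mul (hlip y (abs_le.2 ⟨hy.1, hy.2⟩)) ?_ (abs_nonneg _) (by positivity)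
          have := abs_fosc_le hlam y
          rwa [← hbdef, Set.indicator_of_mem hy] at this
        · have hy0 : fosc lam y = 0 := by
            rw [mem_Icc, not_and_or, not_le, not_le] at hy
            rcases hy with h | h
            · exact fosc_eq_zero_left (by rw [← hbdef]; linarith) (by rw [← hbdef]; exact hb)
            · exact fosc_eq_zero_right (by rw [← hbdef]; exact h) (by rw [← hbdef]; exact hb)
          rw [Set.indicator_of_notMem hy, hy0]
          simp
      calc ‖∫ y : ℝ, G2 y‖ ≤ ∫ y : ℝ, Set.indicator (Icc (-b) b)
            (fun _ => (3/(x+b)^2*b) * (lam/Real.pi)) y :=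
          norm_integral_le_of_norm_le ((integrable_indicator_iff measurableSet_Icc).2
            (integrableOn_const measure_Icc_lt_top.ne)) (Eventually.of_forall hbnd)
        _ = (3/(x+b)^2*b) * (lam/Real.pi) * (2*b) := by
            rw [integral_indicator_const _ measurableSet_Icc, measureReal_def, Real.volume_Icc,
              ENNReal.toReal_ofReal (by linarith : (0:ℝ) ≤ b - -b), smul_eq_mul]
            ring
    -- combine
    have hgx : g x = (∫ y : ℝ, G1 y) + ∫ y : ℝ, G2 y := by
      rw [gF x hx, hsplit, integral_add hintG1 hintG2]
    have hdiff : g x - main x = ∫ y : ℝ, G2 y := by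
      rw [hgx, hintval]; ring
    rw [hdiff]
    refine herr.trans ?_
    -- arithmetic: (3/(x+b)^2*b)*(lam/π)*(2b) = 3b/(x+b)^2 ≤ 12 b /x²
    have hlp : lam/Real.pi = 1/(2*b) := by
      rw [hbdef]; field_simp
    have hxbneg : x + b < 0 := by linarith [hexppos]
    have hxb2 : (0:ℝ) < (x+b)^2 := by nlinarith
    have hx2 : (0:ℝ) < x^2 := by nlinarith
    have heq : (3/(x+b)^2*b) * (lam/Real.pi) * (2*b) = 3*b/(x+b)^2 := by
      rw [hlp]; field_simp
    rw [heq]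
    rw [show (12:ℝ)*b*(x^2)⁻¹ = 12*b/x^2 by rw [div_eq_mul_inv]]
    rw [div_le_div_iff₀ hxb2 hx2]
    have h2 : x^2 ≤ 4*(x+b)^2 := by
      simp only [hx0def] at hx
      nlinarith
    nlinarith [hb.le]
  -- Step C : contradiction
  have hmeas_main : Measurable main := by
    apply Measurable.mul
    · apply Measurable.mul
      · apply Complex.measurable_exp.comp
        exact ((Complex.measurable_ofReal.comp measurable_id).const_mul
          (lam:ℂ)).const_mul Complex.I
      · exact Complex.measurable_ofReal.comp measurable_Kker
    · exact measurable_const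
  have hIg : IntegrableOn g (Iic (-x0)) := hInt.integrableOn
  have herr_int : IntegrableOn (fun x => g x - main x) (Iic (-x0)) := by
    apply Integrable.mono' (g := fun x : ℝ => 12*b*(x^2)⁻¹)
    · exact ((integrableOn_inv_sq_Iic hx0).const_mul (12*b))
    · exact hIg.aestronglyMeasurable.sub hmeas_main.aestronglyMeasurable.restrict
    · rw [ae_restrict_iff' measurableSet_Iic]
      exact Eventually.of_forall (fun x hx => stepB x hx)
  have hmain_int : IntegrableOn main (Iic (-x0)) := by
    have : main = fun x => g x - (g x - main x) := by funext x; ring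
    rw [this]
    exact hIg.sub herr_int
  have hnmain : ∀ x : ℝ, ‖main x‖ = |Kker x| * (2/Real.pi) := by
    intro x
    rw [hmaindef]
    simp only []
    rw [norm_mul, norm_mul,
      show Complex.I * ((lam:ℂ) * (x:ℂ)) = Complex.I * ((lam * x : ℝ) : ℂ) by push_cast; ring,
      hnexp, one_mul, Complex.norm_real, Real.norm_eq_abs]
    congr 1
    simp [norm_div, norm_mul, Complex.norm_I, Complex.norm_real, Real.norm_eq_abs,
      abs_of_pos hpi]
  have hK_int : IntegrableOn Kker (Iic (-x0)) := by
    apply Integrable.mono' (g := fun x : ℝ => (Real.pi/2) * ‖main x‖)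
    · exact hmain_int.norm.const_mul _
    · exact measurable_Kker.aestronglyMeasurable.restrict
    · apply Eventually.of_forall
      intro x
      rw [hnmain x, Real.norm_eq_abs]
      rw [show Real.pi/2 * (|Kker x| * (2/Real.pi)) = |Kker x| by field_simp]
  exact not_integrableOn_Kker (by linarith : (1:ℝ) ≤ x0) hK_int
end
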